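/- arXiv:2308.14314 — 2 statements merged into one kernel-verified Lean document; each statement's English description precedes it below -/
import Mathlib

section
/- The NSA iterates satisfy ∑_{k=1}^∞ (k+p)²·‖∇f(y_k)‖² < ∞. -/
open scoped RealInnerProductSpace

set_option maxHeartbeats 1000000

section aux
variable {E : Type*} [NormedAddCommGroup E] [InnerProductSpace ℝ E] [CompleteSpace E]

lemma nsa_lineDeriv (f : E → ℝ) (hdiff : Differentiable ℝ f) (a v : E) (t : ℝ) :
    HasDerivAt (fun s : ℝ => f (a + s • v)) ⟪gradient f (a + t • v), v⟫ t := by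
  have h1 : HasDerivAt (fun s : ℝ => a + s • v) v t := by
    simpa using ((hasDerivAt_id t).smul_const v).const_add a
  have h2 : HasFDerivAt f (fderiv ℝ f (a + t • v)) (a + t • v) :=
    (hdiff (a + t • v)).hasFDerivAt
  have h3 := h2.comp_hasDerivAt t h1
  have h4 : (fderiv ℝ f (a + t • v)) v = ⟪gradient f (a + t • v), v⟫ := by
    rw [gradient, InnerProductSpace.toDual_symm_apply]
  rw [h4] at h3; exact h3

lemma nsa_convex_ineq (f : E → ℝ) (hconv : ConvexOn ℝ Set.univ f)
    (hdiff : Differentiable ℝ f) (a w : E) :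
    f a + ⟪gradient f a, w - a⟫ ≤ f w := by
  set v := w - a with hv
  have hg : ConvexOn ℝ Set.univ (fun s : ℝ => f (a + s • v)) := by
    refine ⟨convex_univ, fun s _ t _ lam mu hl hm hlm => ?_⟩
    have hpt : a + (lam • s + mu • t) • v = lam • (a + s • v) + mu • (a + t • v) := by
      match_scalars <;> simp only [smul_eq_mul] <;> linarith
    simp only [hpt]
    exact hconv.2 (Set.mem_univ _) (Set.mem_univ _) hl hm hlm
  have hd : HasDerivAt (fun s : ℝ => f (a + s • v)) ⟪gradient f a, v⟫ 0 := by
    simpa using nsa_lineDeriv f hdiff a v 0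
  have hs := hg.le_slope_of_hasDerivAt (Set.mem_univ (0:ℝ)) (Set.mem_univ (1:ℝ))
    one_pos hd
  rw [slope_def_field] at hs
  simp only [one_smul, zero_smul, add_zero, sub_zero, div_one] at hs
  have : a + v = w := by rw [hv]; abel
  rw [this] at hs
  linarith

lemma nsa_descent (f : E → ℝ) (hdiff : Differentiable ℝ f) (L : ℝ) (hL : 0 < L)
    (hlip : ∀ x x' : E, ‖gradient f x - gradient f x'‖ ≤ L * ‖x - x'‖) (a b : E) :
    f b ≤ f a + ⟪gradient f a, b - a⟫ + L / 2 * ‖b - a‖ ^ 2 := by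
  set v := b - a with hv
  set C1 : ℝ := ⟪gradient f a, v⟫ with hC1
  set C2 : ℝ := L / 2 * ‖v‖ ^ 2 with hC2
  set h : ℝ → ℝ := fun t => f (a + t • v) - t * C1 - C2 * t ^ 2 with hh
  have hderiv : ∀ t : ℝ, HasDerivAt h
      (⟪gradient f (a + t • v), v⟫ - C1 - C2 * (2 * t)) t := by
    intro t
    have h1 := nsa_lineDeriv f hdiff a v t
    have h2 : HasDerivAt (fun s : ℝ => s * C1) C1 t := by
      simpa using (hasDerivAt_id t).mul_const C1
    have h3 : HasDerivAt (fun s : ℝ => C2 * s ^ 2) (C2 * (2 * t)) t := by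
      have := (hasDerivAt_pow 2 t).const_mul C2
      simpa [mul_comm] using this
    exact (h1.sub h2).sub h3
  have hmono : AntitoneOn h (Set.Icc 0 1) := by
    apply antitoneOn_of_deriv_nonpos (convex_Icc 0 1)
    · exact fun t _ => (hderiv t).continuousAt.continuousWithinAt
    · exact fun t _ => ((hderiv t).differentiableAt).differentiableWithinAt
    · intro t ht
      rw [interior_Icc] at ht
      rw [(hderiv t).deriv]
      have hb : ⟪gradient f (a + t • v) - gradient f a, v⟫ ≤ L * t * ‖v‖ ^ 2 := by
        calc ⟪gradient f (a + t • v) - gradient f a, v⟫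
            ≤ ‖gradient f (a + t • v) - gradient f a‖ * ‖v‖ := real_inner_le_norm _ _
          _ ≤ (L * ‖(a + t • v) - a‖) * ‖v‖ := by
              apply mul_le_mul_of_nonneg_right _ (norm_nonneg v)
              exact hlip _ _
          _ = L * t * ‖v‖ ^ 2 := by
              simp only [add_sub_cancel_left, norm_smul, Real.norm_eq_abs,
                abs_of_pos ht.1]
              ring
      have hsplit : ⟪gradient f (a + t • v), v⟫ - C1
          = ⟪gradient f (a + t • v) - gradient f a, v⟫ := by
        rw [inner_sub_left, hC1]
      rw [hsplit]
      have : C2 * (2 * t) = L * t * ‖v‖ ^ 2 := by rw [hC2]; ring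
      linarith
  have h10 : h 1 ≤ h 0 := hmono (Set.mem_Icc.2 ⟨le_refl 0, zero_le_one⟩)
    (Set.mem_Icc.2 ⟨zero_le_one, le_refl 1⟩) zero_le_one
  have e0 : h 0 = f a := by simp [hh]
  have e1 : h 1 = f b - C1 - C2 := by
    have hab : a + (1:ℝ) • v = b := by rw [one_smul, hv]; abel
    simp only [hh]; rw [hab]; ring
  rw [e0, e1] at h10
  rw [hC1, hC2] at h10
  linarith

theorem nsa_stmt_9 (n : ℕ) (hn : 1 ≤ n)
    (f : EuclideanSpace ℝ (Fin n) → ℝ)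
    (hconv : ConvexOn ℝ Set.univ f)
    (hdiff : Differentiable ℝ f)
    (L : ℝ) (hL : 0 < L)
    (hlip : ∀ x x' : EuclideanSpace ℝ (Fin n),
      ‖gradient f x - gradient f x'‖ ≤ L * ‖x - x'‖)
    (xstar : EuclideanSpace ℝ (Fin n)) (hmin : ∀ u, f xstar ≤ f u)
    (p : ℝ) (hp : 3 ≤ p)
    (η : ℝ) (hη0 : 0 < η) (hη : η ≤ 2 / (3 * L))
    (α : ℕ → ℝ) (hα : ∀ k : ℕ, α k = p / (k + p))
    (x y z : ℕ → EuclideanSpace ℝ (Fin n))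
    (hx0 : x 0 = z 0)
    (hy : ∀ k, y k = (1 - α k) • x k + α k • z k)
    (hx : ∀ k, x (k + 1) =
      if f (y k - η • gradient f (y k)) ≤ f (x k - η • gradient f (x k))
      then y k - η • gradient f (y k)
      else x k - η • gradient f (x k))
    (hz : ∀ k, z (k + 1) = z k - (η / α k) • gradient f (y k))
    :
    Summable (fun k : ℕ => ((k : ℝ) + p) ^ 2 * ‖gradient f (y k)‖ ^ 2) := by
  have hp0 : (0:ℝ) < p := by linarith
  have hLη : L * η ≤ 2 / 3 := by
    rw [le_div_iff₀ (by positivity : (0:ℝ) < 3 * L)] at hη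
    nlinarith
  -- gradient step descent
  have hdesc : ∀ a : EuclideanSpace ℝ (Fin n),
      f (a - η • gradient f a) ≤ f a - η * (1 - L * η / 2) * ‖gradient f a‖ ^ 2 := by
    intro a
    have h1 := nsa_descent f hdiff L hL hlip a (a - η • gradient f a)
    have h2 : a - η • gradient f a - a = -(η • gradient f a) := by abel
    rw [h2, inner_neg_right, real_inner_smul_right, real_inner_self_eq_norm_sq,
      norm_neg, norm_smul, Real.norm_eq_abs, abs_of_pos hη0, mul_pow] at h1
    nlinarith [h1]
  -- Lyapunov function
  set V : ℕ → ℝ := fun k => 2 * η * ((k:ℝ) + p - 1) ^ 2 * (f (x k) - f xstar)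
      + p ^ 2 * ‖z k - xstar‖ ^ 2 with hV
  have expand : ∀ (c : ℝ) (u w : EuclideanSpace ℝ (Fin n)),
      ‖u - c • w‖ ^ 2 = ‖u‖ ^ 2 - 2 * c * ⟪w, u⟫ + c ^ 2 * ‖w‖ ^ 2 := by
    intro c u w
    rw [norm_sub_sq_real, real_inner_smul_right, norm_smul, Real.norm_eq_abs,
      real_inner_comm, mul_pow, sq_abs]
    ring
  have key : ∀ k : ℕ, V (k+1) + η^2 / 3 * ((k:ℝ) + p)^2 * ‖gradient f (y k)‖^2 ≤ V k := by
    intro k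
    have hq0 : (0:ℝ) < (k:ℝ) + p := by positivity
    have hqne : ((k:ℝ) + p) ≠ 0 := ne_of_gt hq0
    have hpne : p ≠ 0 := ne_of_gt hp0
    have hαk : α k = p / ((k:ℝ) + p) := hα k
    have hc : η / α k = η * ((k:ℝ) + p) / p := by
      rw [hαk]; field_simp
    have hS : p^2 * ‖z (k+1) - xstar‖^2 = p^2 * ‖z k - xstar‖^2
        - 2*η*((k:ℝ)+p)*p * ⟪gradient f (y k), z k - xstar⟫
        + η^2*((k:ℝ)+p)^2 * ‖gradient f (y k)‖^2 := by
      rw [hz k]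
      have h1 : z k - (η / α k) • gradient f (y k) - xstar
          = (z k - xstar) - (η / α k) • gradient f (y k) := by abel
      rw [h1, expand, hc]
      field_simp
    have hvec : p • (z k - xstar)
        = (k:ℝ) • (y k - x k) + p • (y k - xstar) := by
      have hyk := hy k
      rw [hαk] at hyk
      rw [hyk]
      match_scalars <;> field_simp <;> ring
    have hsplitI : p * ⟪gradient f (y k), z k - xstar⟫
        = (k:ℝ) * ⟪gradient f (y k), y k - x k⟫
          + p * ⟪gradient f (y k), y k - xstar⟫ := by
      have h : ⟪gradient f (y k), p • (z k - xstar)⟫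
          = ⟪gradient f (y k), (k:ℝ) • (y k - x k) + p • (y k - xstar)⟫ := by
        rw [hvec]
      rw [inner_add_right, real_inner_smul_right, real_inner_smul_right,
        real_inner_smul_right] at h
      exact h
    have msplit : 2*η*((k:ℝ)+p) * (p * ⟪gradient f (y k), z k - xstar⟫)
        = 2*η*((k:ℝ)+p) * ((k:ℝ) * ⟪gradient f (y k), y k - x k⟫
          + p * ⟪gradient f (y k), y k - xstar⟫) := by rw [hsplitI]
    have hc1 : f (y k) - f (x k) ≤ ⟪gradient f (y k), y k - x k⟫ := by
      have h := nsa_convex_ineq f hconv hdiff (y k) (x k)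
      have h2 : ⟪gradient f (y k), x k - y k⟫
          = -⟪gradient f (y k), y k - x k⟫ := by
        rw [← inner_neg_right]; congr 1; abel
      rw [h2] at h; linarith
    have hc2 : f (y k) - f xstar ≤ ⟪gradient f (y k), y k - xstar⟫ := by
      have h := nsa_convex_ineq f hconv hdiff (y k) xstar
      have h2 : ⟪gradient f (y k), xstar - y k⟫
          = -⟪gradient f (y k), y k - xstar⟫ := by
        rw [← inner_neg_right]; congr 1; abel
      rw [h2] at h; linarith
    have hd1 : f (x (k+1)) ≤ f (y k) - η*(1 - L*η/2)*‖gradient f (y k)‖^2 := by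
      rw [hx k]
      split_ifs with hif
      · exact hdesc (y k)
      · push_neg at hif
        have := hdesc (y k)
        linarith
    have hF0 : 0 ≤ f (x k) - f xstar := sub_nonneg.2 (hmin _)
    have hF1 : 0 ≤ f (x (k+1)) - f xstar := sub_nonneg.2 (hmin _)
    have hFy : 0 ≤ f (y k) - f xstar := sub_nonneg.2 (hmin _)
    have hG : (0:ℝ) ≤ ‖gradient f (y k)‖^2 := by positivity
    have hK : (0:ℝ) ≤ (k:ℝ) := Nat.cast_nonneg k
    have t5' : 0 ≤ ((k:ℝ)+p-1)^2 - ((k:ℝ)+p)*(k:ℝ) := by nlinarith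
    have m5 : 0 ≤ 2*η*(f (x k) - f xstar)*(((k:ℝ)+p-1)^2 - ((k:ℝ)+p)*(k:ℝ)) :=
      mul_nonneg (by positivity) t5'
    have t4 : 0 ≤ η^2*((k:ℝ)+p)^2*‖gradient f (y k)‖^2*(2/3 - L*η) :=
      mul_nonneg (by positivity) (by linarith)
    have m1 : 2*η*((k:ℝ)+p)*(k:ℝ)*(f (y k) - f (x k))
        ≤ 2*η*((k:ℝ)+p)*(k:ℝ)*⟪gradient f (y k), y k - x k⟫ :=
      mul_le_mul_of_nonneg_left hc1 (by positivity)
    have m2 : 2*η*((k:ℝ)+p)*p*(f (y k) - f xstar)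
        ≤ 2*η*((k:ℝ)+p)*p*⟪gradient f (y k), y k - xstar⟫ :=
      mul_le_mul_of_nonneg_left hc2 (by positivity)
    have m3 : 2*η*((k:ℝ)+p)^2*(f (x (k+1)))
        ≤ 2*η*((k:ℝ)+p)^2*(f (y k) - η*(1 - L*η/2)*‖gradient f (y k)‖^2) :=
      mul_le_mul_of_nonneg_left hd1 (by positivity)
    simp only [hV]
    push_cast
    linarith [hS, msplit, m1, m2, m3, t4, m5]
  have hVnn : ∀ N, 0 ≤ V N := by
    intro N
    have h1 : 0 ≤ f (x N) - f xstar := sub_nonneg.2 (hmin _)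
    have h2 : (0:ℝ) ≤ ((N:ℝ) + p - 1)^2 := sq_nonneg _
    have h3 : (0:ℝ) ≤ p^2 * ‖z N - xstar‖^2 := by positivity
    simp only [hV]
    exact add_nonneg (mul_nonneg (by positivity) h1) h3
  have hsumle : ∀ N, ∑ k ∈ Finset.range N,
      (η^2 / 3 * ((k:ℝ) + p)^2 * ‖gradient f (y k)‖^2) ≤ V 0 := by
    intro N
    have h1 : ∑ k ∈ Finset.range N,
        (η^2 / 3 * ((k:ℝ) + p)^2 * ‖gradient f (y k)‖^2)
        ≤ ∑ k ∈ Finset.range N, (V k - V (k+1)) :=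
      Finset.sum_le_sum fun k _ => by linarith [key k]
    have h2 : ∑ k ∈ Finset.range N, (V k - V (k+1)) = V 0 - V N :=
      Finset.sum_range_sub' V N
    refine le_trans h1 ?_
    rw [h2]
    linarith [hVnn N]
  apply summable_of_sum_range_le (c := 3 / η^2 * V 0)
  · intro k; positivity
  · intro N
    have h := hsumle N
    have h2 : ∑ k ∈ Finset.range N, ((k:ℝ) + p)^2 * ‖gradient f (y k)‖^2
        = 3 / η^2 * ∑ k ∈ Finset.range N,
          (η^2 / 3 * ((k:ℝ) + p)^2 * ‖gradient f (y k)‖^2) := by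
      rw [Finset.mul_sum]
      refine Finset.sum_congr rfl fun k _ => ?_
      field_simp
    rw [h2]
    have h3 : (0:ℝ) < 3 / η^2 := by positivity
    exact le_of_le_of_eq (mul_le_mul_of_nonneg_left h h3.le) rfl
end aux
end

section
/- Let y, g ∈ ℝⁿ satisfy the angle condition (3/4)·‖g‖² ≤ ⟨g, ∇f(y)⟩. Then for every step size η ∈ (0, 1/(4L)], one has f(y − 2η·g) ≤ f(y) − η·‖g‖². -/
open scoped RealInnerProductSpace

open InnerProductSpace in
lemma descent_lemma {n : ℕ} (f : EuclideanSpace ℝ (Fin n) → ℝ)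
    (hdiff : Differentiable ℝ f) (L : ℝ) (hL : 0 < L)
    (hlip : ∀ x x' : EuclideanSpace ℝ (Fin n),
      ‖gradient f x - gradient f x'‖ ≤ L * ‖x - x'‖)
    (x v : EuclideanSpace ℝ (Fin n)) :
    f (x + v) ≤ f x + ⟪gradient f x, v⟫ + L / 2 * ‖v‖ ^ 2 := by
  set φ' : ℝ → ℝ := fun t => ⟪gradient f (x + t • v), v⟫ with hφ'
  have hgradlip : LipschitzWith (Real.toNNReal L) (gradient f) := by
    apply LipschitzWith.of_dist_le_mul
    intro a b
    simpa [dist_eq_norm, Real.coe_toNNReal _ hL.le] using hlip a b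
  have hderiv : ∀ t : ℝ, HasDerivAt (fun t : ℝ => f (x + t • v)) (φ' t) t := by
    intro t
    have h1 : HasDerivAt (fun t : ℝ => x + t • v) v t := by
      simpa using ((hasDerivAt_id t).smul_const v).const_add x
    have h2 : HasGradientAt f (gradient f (x + t • v)) (x + t • v) :=
      (hdiff (x + t • v)).hasGradientAt
    have h3 := h2.hasFDerivAt.comp_hasDerivAt t h1
    simpa [toDual_apply_apply, hφ', Function.comp_def] using h3
  have hcont : Continuous φ' := by
    apply Continuous.inner
    · exact hgradlip.continuous.comp (by continuity)
    · exact continuous_const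
  have hint : f (x + v) - f x = ∫ t in (0:ℝ)..1, φ' t := by
    have := intervalIntegral.integral_eq_sub_of_hasDerivAt (f := fun t : ℝ => f (x + t • v))
      (a := (0:ℝ)) (b := 1) (f' := φ') (fun t _ => hderiv t)
      (hcont.intervalIntegrable 0 1)
    rw [this]
    simp
  have hbound : ∀ t ∈ Set.Icc (0:ℝ) 1, φ' t ≤ φ' 0 + L * t * ‖v‖ ^ 2 := by
    intro t ht
    have h1 : φ' t - φ' 0 = ⟪gradient f (x + t • v) - gradient f x, v⟫ := by
      simp [hφ', inner_sub_left]
    have h2 : ⟪gradient f (x + t • v) - gradient f x, v⟫ ≤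
        ‖gradient f (x + t • v) - gradient f x‖ * ‖v‖ := real_inner_le_norm _ _
    have h3 : ‖gradient f (x + t • v) - gradient f x‖ ≤ L * (t * ‖v‖) := by
      have := hlip (x + t • v) x
      simpa [norm_smul, abs_of_nonneg ht.1] using this
    have h4 : ‖gradient f (x + t • v) - gradient f x‖ * ‖v‖ ≤ L * (t * ‖v‖) * ‖v‖ :=
      mul_le_mul_of_nonneg_right h3 (norm_nonneg v)
    nlinarith [norm_nonneg v]
  have hcont2 : Continuous (fun t : ℝ => φ' 0 + L * t * ‖v‖ ^ 2) :=
    continuous_const.add ((continuous_const.mul continuous_id).mul continuous_const)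
  have hintle : (∫ t in (0:ℝ)..1, φ' t) ≤ ∫ t in (0:ℝ)..1, (φ' 0 + L * t * ‖v‖ ^ 2) := by
    apply intervalIntegral.integral_mono_on (by norm_num)
      (hcont.intervalIntegrable 0 1) (hcont2.intervalIntegrable 0 1)
    exact hbound
  have hinteval : (∫ t in (0:ℝ)..1, (φ' 0 + L * t * ‖v‖ ^ 2)) = φ' 0 + L / 2 * ‖v‖ ^ 2 := by
    have e1 : (fun t : ℝ => φ' 0 + L * t * ‖v‖ ^ 2)
        = fun t : ℝ => φ' 0 + (L * ‖v‖ ^ 2) * t := by funext t; ring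
    rw [e1, intervalIntegral.integral_add (intervalIntegrable_const)
      (by exact (continuous_const.mul continuous_id).intervalIntegrable 0 1),
      intervalIntegral.integral_const_mul, integral_id]
    simp
    ring
  have : φ' 0 = ⟪gradient f x, v⟫ := by simp [hφ']
  linarith [hintle, hinteval ▸ hintle]

/-- If `g` satisfies the angle condition `(3/4)‖g‖² ≤ ⟨g, ∇f(y)⟩`, then for any
step size `η ∈ (0, 1/(4L)]`, `f (y - 2η g) ≤ f y - η ‖g‖²`. -/
theorem nsa_stmt_10 (n : ℕ) (hn : 1 ≤ n)
    (f : EuclideanSpace ℝ (Fin n) → ℝ)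
    (hdiff : Differentiable ℝ f)
    (L : ℝ) (hL : 0 < L)
    (hlip : ∀ x x' : EuclideanSpace ℝ (Fin n),
      ‖gradient f x - gradient f x'‖ ≤ L * ‖x - x'‖)
    (y g : EuclideanSpace ℝ (Fin n))
    (hangle : (3 / 4) * ‖g‖ ^ 2 ≤ ⟪g, gradient f y⟫)
    (η : ℝ) (hη0 : 0 < η) (hη : η ≤ 1 / (4 * L)) :
    f (y - (2 * η) • g) ≤ f y - η * ‖g‖ ^ 2 := by
  have key := descent_lemma f hdiff L hL hlip y (-((2 * η) • g))
  have h1 : y + -((2 * η) • g) = y - (2 * η) • g := by abel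
  rw [h1] at key
  have h2 : ⟪gradient f y, -((2 * η) • g)⟫ = -(2 * η) * ⟪g, gradient f y⟫ := by
    rw [inner_neg_right, real_inner_smul_right, real_inner_comm]
    ring
  have h3 : ‖-((2 * η) • g)‖ ^ 2 = 4 * η ^ 2 * ‖g‖ ^ 2 := by
    rw [norm_neg, norm_smul]
    simp
    rw [abs_of_nonneg hη0.le]
    ring
  rw [h2, h3] at key
  have hηL : η * L ≤ 1 / 4 := by
    rw [le_div_iff₀ (by positivity)] at hη
    nlinarith
  have : L / 2 * (4 * η ^ 2 * ‖g‖ ^ 2) ≤ η / 2 * ‖g‖ ^ 2 := by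
    nlinarith [sq_nonneg ‖g‖, hη0.le]
  nlinarith [hangle, hη0.le, sq_nonneg ‖g‖]
end
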